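/- Let P be a finitely generated abelian group and M_1 ⊇ M_2 ⊇ M_3 ⊇ ... a descending chain of subgroups such that for each n there exists a homomorphism r_n : P → M_n fixing M_{n+1} pointwise. Then the chain stabilizes. -/

import Mathlib

open Submodule

/-- An antitone sequence of natural numbers is eventually constant. -/
private lemma nat_antitone_stabilizes (d : ℕ → ℕ) (h : ∀ n, d (n + 1) ≤ d n) :
    ∃ k, ∀ n ≥ k, d n = d k := by
  have hant : Antitone d := antitone_nat_of_succ_le h
  have hne : (Set.range d).Nonempty := ⟨d 0, 0, rfl⟩
  obtain ⟨k, hk⟩ := Nat.sInf_mem hne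
  refine ⟨k, fun n hn => le_antisymm (hant hn) ?_⟩
  rw [hk]
  exact Nat.sInf_le ⟨n, rfl⟩

/-- Submodules with a finite ambient one and equal (finite) cardinality are equal. -/
private lemma submodule_eq_of_le_of_card_le {R M : Type*} [Ring R] [AddCommGroup M] [Module R M]
    {p q : Submodule R M} (h : p ≤ q) [Finite q] (hc : Nat.card q ≤ Nat.card p) : p = q := by
  haveI : Finite p := Finite.of_injective _ (Submodule.inclusion_injective h)
  have hbij : Function.Bijective (Submodule.inclusion h) :=
    (Nat.bijective_iff_injective_and_card _).mpr
      ⟨Submodule.inclusion_injective h, le_antisymm (Nat.card_le_card_of_injective _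
        (Submodule.inclusion_injective h)) hc⟩
  refine le_antisymm h fun x hx => ?_
  obtain ⟨⟨y, hy⟩, hxy⟩ := hbij.2 ⟨x, hx⟩
  have : (y : M) = x := congrArg Subtype.val hxy
  exact this ▸ hy

/-- For an antitone sequence of submodules of a f.g. module over a domain, after localizing at
the nonzero divisors the sequence stabilizes: eventually each member is contained in every other
up to nonzero scalars. -/
private lemma localization_stabilizes {R P : Type*} [CommRing R] [IsDomain R]
    [AddCommGroup P] [Module R P] [Module.Finite R P]
    (S : ℕ → Submodule R P) (hant : ∀ {m n : ℕ}, m ≤ n → S n ≤ S m) :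
    ∃ k, ∀ m ≥ k, ∀ n ≥ k, ∀ a ∈ S m, ∃ c : R, c ≠ 0 ∧ c • a ∈ S n := by
  classical
  haveI : Module.Finite (FractionRing R) (LocalizedModule (nonZeroDivisors R) P) :=
    Module.Finite.of_isLocalizedModule (Rₚ := FractionRing R) (nonZeroDivisors R)
      (LocalizedModule.mkLinearMap (nonZeroDivisors R) P)
  have hWant : ∀ {m n : ℕ}, m ≤ n →
      (S n).localized' (FractionRing R) (nonZeroDivisors R)
        (LocalizedModule.mkLinearMap (nonZeroDivisors R) P) ≤
      (S m).localized' (FractionRing R) (nonZeroDivisors R)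
        (LocalizedModule.mkLinearMap (nonZeroDivisors R) P) := by
    intro m n hmn x hx
    obtain ⟨y, hy, s, rfl⟩ := (Submodule.mem_localized' _ _ _ _ _).mp hx
    exact (Submodule.mem_localized' _ _ _ _ _).mpr ⟨y, hant hmn hy, s, rfl⟩
  obtain ⟨k, hk⟩ := nat_antitone_stabilizes
    (fun n => Module.finrank (FractionRing R)
      ((S n).localized' (FractionRing R) (nonZeroDivisors R)
        (LocalizedModule.mkLinearMap (nonZeroDivisors R) P)))
    (fun n => Submodule.finrank_mono (hWant (Nat.le_succ n)))
  have hW : ∀ n ≥ k, (S n).localized' (FractionRing R) (nonZeroDivisors R)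
        (LocalizedModule.mkLinearMap (nonZeroDivisors R) P) =
      (S k).localized' (FractionRing R) (nonZeroDivisors R)
        (LocalizedModule.mkLinearMap (nonZeroDivisors R) P) := fun n hn =>
    Submodule.eq_of_le_of_finrank_le (hWant hn) (hk n hn).ge
  refine ⟨k, fun m hm n hn a ha => ?_⟩
  have hfa : LocalizedModule.mkLinearMap (nonZeroDivisors R) P a ∈
      (S n).localized' (FractionRing R) (nonZeroDivisors R)
        (LocalizedModule.mkLinearMap (nonZeroDivisors R) P) := by
    rw [hW n hn, ← hW m hm]
    exact (Submodule.mem_localized' _ _ _ _ _).mpr ⟨a, ha, 1, IsLocalizedModule.mk'_one _ _ _⟩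
  obtain ⟨y, hy, s, hys⟩ := (Submodule.mem_localized' _ _ _ _ _).mp hfa
  have h1 : LocalizedModule.mkLinearMap (nonZeroDivisors R) P ((s : R) • a - y) = 0 := by
    have h2 : (s : R) • LocalizedModule.mkLinearMap (nonZeroDivisors R) P a =
        LocalizedModule.mkLinearMap (nonZeroDivisors R) P y := by
      rw [← hys, ← Submonoid.smul_def, IsLocalizedModule.mk'_cancel']
    rw [map_sub, map_smul, h2, sub_self]
  obtain ⟨t, ht⟩ := (IsLocalizedModule.eq_zero_iff (nonZeroDivisors R)
    (LocalizedModule.mkLinearMap (nonZeroDivisors R) P)).mp h1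
  refine ⟨(t : R) * (s : R),
    mul_ne_zero (nonZeroDivisors.coe_ne_zero t) (nonZeroDivisors.coe_ne_zero s), ?_⟩
  have h3 : (t : R) • ((s : R) • a - y) = 0 := by
    rw [← Submonoid.smul_def]; exact ht
  rw [smul_sub, sub_eq_zero] at h3
  rw [mul_smul, h3]
  exact Submodule.smul_mem _ _ hy

/-- In a finitely generated abelian group `P`, a descending chain of subgroups
each of which is a retract of `P` inside the previous one stabilizes. -/
theorem fg_abelian_retract_chain_stabilizes
    {P : Type*} [AddCommGroup P] [AddGroup.FG P]
    (M : ℕ → AddSubgroup P) (hdesc : ∀ n, M (n + 1) ≤ M n)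
    (r : ℕ → (P →+ P))
    (hrange : ∀ n, (r n).range ≤ M n)
    (hfix : ∀ n, ∀ x ∈ M (n + 1), r n x = x) :
    ∃ k, ∀ n ≥ k, M n = M k := by
  classical
  haveI hPfin : Module.Finite ℤ P := Module.Finite.iff_addGroup_fg.mpr ‹AddGroup.FG P›
  -- the iterated composites `C n = r n ∘ ⋯ ∘ r 0`
  let C : ℕ → (P →+ P) := fun n => Nat.rec (r 0) (fun m Cm => (r (m + 1)).comp Cm) n
  have hCsucc : ∀ n x, C (n + 1) x = r (n + 1) (C n x) := fun n x => rfl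
  -- basic facts
  have hCrange : ∀ n, (C n).range ≤ M n := by
    intro n
    induction n with
    | zero => exact hrange 0
    | succ n ih => rintro _ ⟨x, rfl⟩; exact hrange (n + 1) ⟨C n x, rfl⟩
  have hCfix : ∀ n, ∀ x ∈ M (n + 1), C n x = x := by
    intro n
    induction n with
    | zero => exact hfix 0
    | succ n ih =>
      intro x hx
      have hx' : x ∈ M (n + 1) := hdesc _ hx
      rw [hCsucc, ih x hx', hfix (n + 1) x hx]
  have hMleC : ∀ n, ∀ x ∈ M (n + 1), x ∈ (C n).range := fun n x hx => ⟨x, hCfix n x hx⟩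
  have hCdesc : ∀ n, (C (n + 1)).range ≤ (C n).range := by
    rintro n _ ⟨x, rfl⟩
    exact hMleC n _ (hrange (n + 1) ⟨C n x, rfl⟩)
  have hCant : ∀ {m n : ℕ}, m ≤ n → (C n).range ≤ (C m).range := by
    intro m n hmn
    induction hmn with
    | refl => exact le_rfl
    | step h ih => exact le_trans (hCdesc _) ih
  -- the ranges as ℤ-submodules
  let S : ℕ → Submodule ℤ P := fun n => AddSubgroup.toIntSubmodule (C n).range
  have hSant : ∀ {m n : ℕ}, m ≤ n → S n ≤ S m := fun {m n} hmn x hx => hCant hmn hx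
  -- stabilization of the localizations
  obtain ⟨k₁, hk₁⟩ := localization_stabilizes S hSant
  -- stabilization of torsion parts
  let T : Submodule ℤ P := Submodule.torsion ℤ P
  haveI : Module.Finite ℤ T := Module.Finite.iff_fg.mpr (IsNoetherian.noetherian T)
  haveI hTfinite : Finite ↥T := Module.finite_of_fg_torsion ↥T (Submodule.torsion_isTorsion)
  have hfinTS : ∀ n, Finite ↥(T ⊓ S n) := fun n =>
    Finite.of_injective _ (Submodule.inclusion_injective (inf_le_left : T ⊓ S n ≤ T))
  obtain ⟨k₂, hk₂⟩ := nat_antitone_stabilizes (fun n => Nat.card ↥(T ⊓ S n)) (by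
    intro n
    haveI := hfinTS n
    exact Nat.card_le_card_of_injective _
      (Submodule.inclusion_injective (inf_le_inf_left T (hSant (Nat.le_succ n)))))
  have hT : ∀ n ≥ k₂, T ⊓ S n = T ⊓ S k₂ := by
    intro n hn
    haveI := hfinTS k₂
    exact submodule_eq_of_le_of_card_le (inf_le_inf_left T (hSant hn)) (hk₂ n hn).ge
  -- the key step
  set k := max k₁ k₂ with hkdef
  have key : ∀ n ≥ k, (C n).range ≤ (C (n + 1)).range := by
    rintro n hn a ⟨x, rfl⟩
    set a := C n x with ha
    have haS : a ∈ S n := ⟨x, rfl⟩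
    have hk₁n : k₁ ≤ n := le_trans (le_max_left _ _) hn
    have hk₂n : k₂ ≤ n := le_trans (le_max_right _ _) hn
    -- a nonzero multiple of `a` lies in `M (n+2)`
    obtain ⟨c, hc0, hcS⟩ := hk₁ n hk₁n (n + 2) (by omega) a haS
    have hcaM : c • a ∈ M (n + 2) := hCrange (n + 2) hcS
    -- hence `r (n+1)` moves `a` by a torsion element
    have hc1 : c • (r (n + 1) a - a) = 0 := by
      have h5 := hfix (n + 1) _ hcaM
      rw [map_zsmul] at h5
      rw [smul_sub, h5, sub_self]
    have hdT : r (n + 1) a - a ∈ T := by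
      rw [Submodule.mem_torsion_iff]
      exact ⟨⟨c, mem_nonZeroDivisors_of_ne_zero hc0⟩, by rw [Submonoid.smul_def]; exact hc1⟩
    have hdS : r (n + 1) a - a ∈ S n := by
      refine sub_mem ?_ haS
      exact hMleC n _ (hrange (n + 1) ⟨a, rfl⟩)
    have hdS1 : r (n + 1) a - a ∈ S (n + 1) := by
      have h3 : r (n + 1) a - a ∈ T ⊓ S n := ⟨hdT, hdS⟩
      rw [hT n hk₂n, ← hT (n + 1) (by omega)] at h3
      exact h3.2
    -- conclude : `a` is in the range of `C (n+1)`
    have h4 : r (n + 1) a ∈ S (n + 1) := ⟨x, (hCsucc n x).symm⟩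
    have h6 := sub_mem h4 hdS1
    exact (by simpa using h6 : a ∈ S (n + 1))
  have hstab : ∀ n ≥ k, (C n).range = (C k).range := by
    intro n hn
    refine Nat.le_induction rfl (fun n hn ih => ?_) n hn
    rw [← ih]
    exact le_antisymm (hCdesc n) (key n hn)
  refine ⟨k + 1, fun n hn => ?_⟩
  have hMC : ∀ j ≥ k, M (j + 1) = (C k).range := by
    intro j hj
    refine le_antisymm ?_ ?_
    · rw [← hstab j hj]
      exact fun x hx => hMleC j x hx
    · rw [← hstab (j + 1) (by omega)]
      exact hCrange (j + 1)
  obtain ⟨m, rfl⟩ : ∃ m, n = m + 1 := ⟨n - 1, by omega⟩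
  rw [hMC m (by omega), hMC k le_rfl]
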